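/- Let Λ_1, Λ_2, Γ_1, Γ_2 be unital quantum channels on ℂ^d. Then d_av^ch(Λ_1 ∘ Λ_2, Γ_1 ∘ Γ_2) ≤ d_av^ch(Λ_1, Γ_1) + d_av^ch(Λ_2, Γ_2). -/

import Mathlib

open Matrix Kronecker ComplexOrder

/-- The Hilbert–Schmidt (Frobenius) norm of a complex matrix. -/
noncomputable def hsNorm {n : Type*} [Fintype n] (A : Matrix n n ℂ) : ℝ :=
  Real.sqrt ((Matrix.trace (Aᴴ * A)).re)

/-- The (normalized) Choi matrix `J_Λ = (1/d) ∑ᵢⱼ E_ij ⊗ Λ(E_ij)` of a linear map on matrices. -/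
noncomputable def choi {n : Type*} [Fintype n] [DecidableEq n]
    (Λ : Matrix n n ℂ →ₗ[ℂ] Matrix n n ℂ) : Matrix (n × n) (n × n) ℂ :=
  ((Fintype.card n : ℂ))⁻¹ •
    ∑ i, ∑ j, (Matrix.single i j (1 : ℂ)) ⊗ₖ Λ (Matrix.single i j (1 : ℂ))

/-- A quantum channel: a completely positive (positive semidefinite Choi matrix)
trace-preserving linear map. -/
def IsChannel {n : Type*} [Fintype n] [DecidableEq n]
    (Λ : Matrix n n ℂ →ₗ[ℂ] Matrix n n ℂ) : Prop :=
  (choi Λ).PosSemidef ∧ ∀ X, (Λ X).trace = X.trace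

/-- The average-case distance between quantum channels,
`(1/2) √(‖J_Λ − J_Γ‖_HS² + ‖(Λ−Γ)(I/d)‖_HS²)`. -/
noncomputable def davCh {n : Type*} [Fintype n] [DecidableEq n]
    (Λ Γ : Matrix n n ℂ →ₗ[ℂ] Matrix n n ℂ) : ℝ :=
  (1 / 2) * Real.sqrt ((hsNorm (choi Λ - choi Γ)) ^ 2 +
    (hsNorm (Λ (((Fintype.card n : ℂ))⁻¹ • 1) - Γ (((Fintype.card n : ℂ))⁻¹ • 1))) ^ 2)

set_option linter.unusedSectionVars false
set_option linter.unusedVariables false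
set_option maxHeartbeats 1000000

namespace S15


variable {n : Type*} [Fintype n] [DecidableEq n]

noncomputable def hsq {n : Type*} [Fintype n] (A : Matrix n n ℂ) : ℝ :=
  ∑ p : n × n, Complex.normSq (A p.1 p.2)

lemma hsq_nonneg {n : Type*} [Fintype n] (A : Matrix n n ℂ) : 0 ≤ hsq A :=
  Finset.sum_nonneg fun _ _ => Complex.normSq_nonneg _

lemma trace_conjTranspose_mul_self {n : Type*} [Fintype n] (A : Matrix n n ℂ) :
    Matrix.trace (Aᴴ * A) = (hsq A : ℂ) := by
  simp only [Matrix.trace, Matrix.diag, Matrix.mul_apply, Matrix.conjTranspose_apply, hsq]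
  push_cast
  rw [Fintype.sum_prod_type, Finset.sum_comm]
  refine Finset.sum_congr rfl fun i _ => Finset.sum_congr rfl fun j _ => ?_
  simp [← Complex.normSq_eq_conj_mul_self, RingHom.coe_coe]

lemma hsNorm_eq {n : Type*} [Fintype n] (A : Matrix n n ℂ) :
    hsNorm A = Real.sqrt (hsq A) := by
  rw [hsNorm, trace_conjTranspose_mul_self]
  norm_num

lemma hsNorm_nonneg {n : Type*} [Fintype n] (A : Matrix n n ℂ) : 0 ≤ hsNorm A :=
  Real.sqrt_nonneg _

lemma sq_hsNorm {n : Type*} [Fintype n] (A : Matrix n n ℂ) : hsNorm A ^ 2 = hsq A := by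
  rw [hsNorm_eq, Real.sq_sqrt (hsq_nonneg A)]

lemma hsNorm_le_hsNorm {n : Type*} [Fintype n] {A B : Matrix n n ℂ} (h : hsq A ≤ hsq B) :
    hsNorm A ≤ hsNorm B := by
  rw [hsNorm_eq, hsNorm_eq]; exact Real.sqrt_le_sqrt h

/-- Euclidean-space incarnation. -/
noncomputable def toE {n : Type*} [Fintype n] (A : Matrix n n ℂ) : EuclideanSpace ℂ (n × n) :=
  WithLp.toLp 2 (fun p : n × n => A p.1 p.2)

lemma norm_toE {n : Type*} [Fintype n] (A : Matrix n n ℂ) : ‖toE A‖ = hsNorm A := by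
  rw [EuclideanSpace.norm_eq, hsNorm_eq, hsq]
  congr 1
  refine Finset.sum_congr rfl fun p _ => ?_
  rw [← Complex.sq_norm]
  rfl

lemma hsNorm_add_le {n : Type*} [Fintype n] (A B : Matrix n n ℂ) :
    hsNorm (A + B) ≤ hsNorm A + hsNorm B := by
  have h : toE (A + B) = toE A + toE B := rfl
  rw [← norm_toE, ← norm_toE, ← norm_toE, h]
  exact norm_add_le _ _





variable {n m : Type*} [Fintype n] [Fintype m] [DecidableEq n]

lemma re_trace_nonneg (M : Matrix n n ℂ) : 0 ≤ (Matrix.trace (Mᴴ * M)).re := by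
  rw [trace_conjTranspose_mul_self]; simpa using hsq_nonneg M

lemma re_trace_inner_le (A B : Matrix n n ℂ) :
    (Matrix.trace (Aᴴ * B)).re ≤
      ((Matrix.trace (Aᴴ * A)).re + (Matrix.trace (Bᴴ * B)).re) / 2 := by
  have h0 := re_trace_nonneg (A - B)
  have hexp : Matrix.trace ((A - B)ᴴ * (A - B)) =
      Matrix.trace (Aᴴ * A) - Matrix.trace (Aᴴ * B) - Matrix.trace (Bᴴ * A)
        + Matrix.trace (Bᴴ * B) := by
    simp only [Matrix.conjTranspose_sub, Matrix.sub_mul, Matrix.mul_sub, Matrix.trace_sub]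
    ring
  have hBA : (Matrix.trace (Bᴴ * A)).re = (Matrix.trace (Aᴴ * B)).re := by
    rw [show Bᴴ * A = (Aᴴ * B)ᴴ by simp [Matrix.conjTranspose_mul],
      Matrix.trace_conjTranspose]
    simp
  rw [hexp] at h0
  simp only [Complex.sub_re, Complex.add_re] at h0
  linarith

lemma kraus_contraction (K : m → Matrix n n ℂ)
    (h1 : ∑ a, (K a)ᴴ * K a = 1) (h2 : ∑ a, K a * (K a)ᴴ = 1) (X : Matrix n n ℂ) :
    hsNorm (∑ a, K a * X * (K a)ᴴ) ≤ hsNorm X := by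
  classical
  set C : m → m → Matrix n n ℂ := fun a b => (K a)ᴴ * K b with hC
  set Y : Matrix n n ℂ := ∑ a, K a * X * (K a)ᴴ with hYdef
  -- trace (Yᴴ Y) as double sum
  have hterm : ∀ a b, Matrix.trace ((K a * X * (K a)ᴴ)ᴴ * (K b * X * (K b)ᴴ)) =
      Matrix.trace ((X * C a b)ᴴ * (C a b * X)) := by
    intro a b
    have e1 : (K a * X * (K a)ᴴ)ᴴ * (K b * X * (K b)ᴴ) =
        (K a * Xᴴ * ((K a)ᴴ * (K b * X))) * (K b)ᴴ := by
      simp [Matrix.conjTranspose_mul, mul_assoc]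
    have e2 : (X * C a b)ᴴ * (C a b * X) =
        (K b)ᴴ * (K a * Xᴴ * ((K a)ᴴ * (K b * X))) := by
      simp [hC, Matrix.conjTranspose_mul, mul_assoc]
    rw [e1, e2, Matrix.trace_mul_comm]
  have hA : Matrix.trace (Yᴴ * Y) =
      ∑ a, ∑ b, Matrix.trace ((X * C a b)ᴴ * (C a b * X)) := by
    have : Yᴴ * Y = ∑ a, ∑ b, (K a * X * (K a)ᴴ)ᴴ * (K b * X * (K b)ᴴ) := by
      rw [hYdef, Matrix.conjTranspose_sum, Finset.sum_mul_sum]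
    rw [this, Matrix.trace_sum]
    simp only [Matrix.trace_sum]
    exact Finset.sum_congr rfl fun a _ => Finset.sum_congr rfl fun b _ => hterm a b
  -- first sum rule
  have hB : ∑ a, ∑ b, Matrix.trace ((C a b * X)ᴴ * (C a b * X)) = Matrix.trace (Xᴴ * X) := by
    have hmat : ∑ a, ∑ b, (C a b * X)ᴴ * (C a b * X) = Xᴴ * X := by
      have e : ∀ a b, (C a b * X)ᴴ * (C a b * X) =
          Xᴴ * ((K b)ᴴ * (K a * (K a)ᴴ * K b)) * X := by
        intro a b; simp [hC, Matrix.conjTranspose_mul, mul_assoc]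
      simp only [e]
      rw [Finset.sum_comm]
      have : ∀ b, ∑ a, Xᴴ * ((K b)ᴴ * (K a * (K a)ᴴ * K b)) * X
          = Xᴴ * ((K b)ᴴ * K b) * X := by
        intro b
        rw [← Finset.sum_mul, ← Finset.mul_sum]
        congr 2
        rw [← Finset.mul_sum, ← Finset.sum_mul, h2, one_mul]
      simp only [this]
      rw [← Finset.sum_mul, ← Finset.mul_sum, h1, mul_one]
    conv_rhs => rw [← hmat]
    simp [Matrix.trace_sum]
  have hCsum : ∑ a, ∑ b, Matrix.trace ((X * C a b)ᴴ * (X * C a b)) = Matrix.trace (Xᴴ * X) := by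
    have e : ∀ a b, Matrix.trace ((X * C a b)ᴴ * (X * C a b)) =
        Matrix.trace ((Xᴴ * X) * (C a b * (C a b)ᴴ)) := by
      intro a b
      have e1 : (X * C a b)ᴴ * (X * C a b) = (C a b)ᴴ * (Xᴴ * X * C a b) := by
        simp [Matrix.conjTranspose_mul, mul_assoc]
      rw [e1, Matrix.trace_mul_comm]
      congr 1
      simp [mul_assoc]
    simp only [e]
    have hmat : ∑ a, ∑ b, C a b * (C a b)ᴴ = (1 : Matrix n n ℂ) := by
      have e2 : ∀ a b, C a b * (C a b)ᴴ = (K a)ᴴ * (K b * (K b)ᴴ) * K a := by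
        intro a b; simp [hC, Matrix.conjTranspose_mul, mul_assoc]
      simp only [e2]
      have e3 : ∀ a, ∑ b, (K a)ᴴ * (K b * (K b)ᴴ) * K a = (K a)ᴴ * K a := by
        intro a
        rw [← Finset.sum_mul, ← Finset.mul_sum, h2, mul_one]
      simp only [e3]; exact h1
    have e4 : ∑ a, ∑ b, Matrix.trace ((Xᴴ * X) * (C a b * (C a b)ᴴ))
        = Matrix.trace ((Xᴴ * X) * (∑ a, ∑ b, C a b * (C a b)ᴴ)) := by
      simp [Finset.mul_sum, Matrix.trace_sum]
    rw [e4, hmat, mul_one]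
  apply hsNorm_le_hsNorm
  have hYq : hsq Y = (Matrix.trace (Yᴴ * Y)).re := by
    rw [trace_conjTranspose_mul_self]; simp
  have hXq : hsq X = (Matrix.trace (Xᴴ * X)).re := by
    rw [trace_conjTranspose_mul_self]; simp
  have hB' : ∑ a, ∑ b, (Matrix.trace ((C a b * X)ᴴ * (C a b * X))).re
      = (Matrix.trace (Xᴴ * X)).re := by
    have := congrArg Complex.re hB
    simpa [Complex.re_sum] using this
  have hC' : ∑ a, ∑ b, (Matrix.trace ((X * C a b)ᴴ * (X * C a b))).re
      = (Matrix.trace (Xᴴ * X)).re := by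
    have := congrArg Complex.re hCsum
    simpa [Complex.re_sum] using this
  rw [hYq, hXq, hA]
  calc (∑ a, ∑ b, Matrix.trace ((X * C a b)ᴴ * (C a b * X))).re
      = ∑ a, ∑ b, (Matrix.trace ((X * C a b)ᴴ * (C a b * X))).re := by
        simp [Complex.re_sum]
    _ ≤ ∑ a, ∑ b, ((Matrix.trace ((X * C a b)ᴴ * (X * C a b))).re
          + (Matrix.trace ((C a b * X)ᴴ * (C a b * X))).re) / 2 :=
        Finset.sum_le_sum fun a _ => Finset.sum_le_sum fun b _ =>
          re_trace_inner_le (X * C a b) (C a b * X)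
    _ = ((∑ a, ∑ b, (Matrix.trace ((X * C a b)ᴴ * (X * C a b))).re)
          + (∑ a, ∑ b, (Matrix.trace ((C a b * X)ᴴ * (C a b * X))).re)) / 2 := by
        simp only [add_div, Finset.sum_add_distrib, Finset.sum_div]
    _ = (Matrix.trace (Xᴴ * X)).re := by rw [hB', hC']; ring


variable {n : Type*} [Fintype n] [DecidableEq n]

lemma choi_apply (Λ : Matrix n n ℂ →ₗ[ℂ] Matrix n n ℂ) (i x j y : n) :
    choi Λ (i, x) (j, y) =
      (Fintype.card n : ℂ)⁻¹ * Λ (Matrix.single i j 1) x y := by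
  simp only [choi, Matrix.smul_apply, Matrix.sum_apply, Matrix.kroneckerMap_apply, smul_eq_mul]
  congr 1
  simp [Matrix.single, ite_and, ite_mul, one_mul, zero_mul, Finset.sum_ite_eq']

lemma trace_mul_stdBasisMatrix (M : Matrix n n ℂ) (p q : n) :
    Matrix.trace (M * Matrix.single p q 1) = M q p := by
  simp [Matrix.trace, Matrix.diag, Matrix.mul_apply, Matrix.single, ite_and,
    mul_ite, mul_one, mul_zero, Finset.sum_ite_eq, Finset.sum_ite_eq']

lemma exists_kraus (Λ : Matrix n n ℂ →ₗ[ℂ] Matrix n n ℂ) (h : IsChannel Λ) (hu : Λ 1 = 1) :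
    ∃ K : (n × n) → Matrix n n ℂ,
      (∀ X, Λ X = ∑ a, K a * X * (K a)ᴴ) ∧
      (∑ a, (K a)ᴴ * K a = 1) ∧ (∑ a, K a * (K a)ᴴ = 1) := by
  classical
  by_cases hcard : Fintype.card n = 0
  · have : IsEmpty n := Fintype.card_eq_zero_iff.mp hcard
    exact ⟨0, fun X => Subsingleton.elim _ _, Subsingleton.elim _ _, Subsingleton.elim _ _⟩
  obtain ⟨B, hB⟩ : ∃ B : Matrix (n × n) (n × n) ℂ, choi Λ = Bᴴ * B := by
    open scoped MatrixOrder in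
    obtain ⟨B, hB⟩ := CStarAlgebra.nonneg_iff_eq_star_mul_self.mp h.1.nonneg
    exact ⟨B, hB⟩
  set c : ℝ := Real.sqrt (Fintype.card n) with hc
  set K : (n × n) → Matrix n n ℂ :=
    fun a => Matrix.of (fun x i => (c : ℂ) * (starRingEnd ℂ) (B a (i, x))) with hK
  have hne : (Fintype.card n : ℂ) ≠ 0 := Nat.cast_ne_zero.mpr hcard
  have hcc : (c : ℂ) * (c : ℂ) = (Fintype.card n : ℂ) := by
    norm_cast
    rw [hc, Real.mul_self_sqrt (by positivity)]
  -- representation on basis matrices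
  have hrep : ∀ i j : n, Λ (Matrix.single i j 1) =
      ∑ a, K a * Matrix.single i j 1 * (K a)ᴴ := by
    intro i j
    ext x y
    have hentry : Λ (Matrix.single i j 1) x y =
        (Fintype.card n : ℂ) * (Bᴴ * B) (i, x) (j, y) := by
      have h1 := choi_apply Λ i x j y
      rw [hB] at h1
      rw [h1, mul_inv_cancel_left₀ hne]
    have hKE : ∀ a, ((K a * Matrix.single i j 1 * (K a)ᴴ : Matrix n n ℂ)) x y
        = K a x i * star (K a y j) := by
      intro a
      simp [Matrix.mul_apply, Matrix.conjTranspose_apply, Matrix.single,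
        ite_and, mul_ite, ite_mul, zero_mul, mul_zero, Finset.sum_ite_eq,
        Finset.sum_ite_eq', Finset.mul_sum, Finset.sum_mul]
    rw [hentry, Matrix.sum_apply]
    simp only [hKE]
    rw [Matrix.mul_apply, Finset.mul_sum]
    refine Finset.sum_congr rfl fun a _ => ?_
    simp only [hK, Matrix.of_apply, Matrix.conjTranspose_apply, Complex.star_def,
      RingHom.map_mul, Complex.conj_conj, Complex.conj_ofReal]
    linear_combination (-((starRingEnd ℂ) (B a (i, x)) * B a (j, y))) * hcc
  -- representation for all X
  have hrepX : ∀ X, Λ X = ∑ a, K a * X * (K a)ᴴ := by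
    intro X
    have hX' : X = ∑ i, ∑ j, X i j • Matrix.single i j (1 : ℂ) := by
      conv_lhs => rw [Matrix.matrix_eq_sum_single X]
      simp [Matrix.smul_single, smul_eq_mul]
    have e : ∀ a, K a * X * (K a)ᴴ
        = ∑ i, ∑ j, X i j • (K a * Matrix.single i j 1 * (K a)ᴴ) := by
      intro a
      conv_lhs => rw [hX']
      simp only [Finset.mul_sum, Finset.sum_mul]
      refine Finset.sum_congr rfl fun p _ => Finset.sum_congr rfl fun q _ => ?_
      rw [Matrix.mul_smul, Matrix.smul_mul]
    calc Λ X = ∑ i, ∑ j, X i j • Λ (Matrix.single i j 1) := by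
          conv_lhs => rw [hX']
          rw [map_sum]
          refine Finset.sum_congr rfl fun p _ => ?_
          rw [map_sum]
          refine Finset.sum_congr rfl fun q _ => ?_
          rw [LinearMap.map_smul]
      _ = ∑ i, ∑ j, ∑ a, X i j • (K a * Matrix.single i j 1 * (K a)ᴴ) := by
          simp only [hrep, Finset.smul_sum]
      _ = ∑ a, K a * X * (K a)ᴴ := by
          simp only [e]
          rw [show (∑ i, ∑ j, ∑ a : n × n, X i j • (K a * Matrix.single i j 1 * (K a)ᴴ))
              = ∑ i, ∑ a : n × n, ∑ j, X i j • (K a * Matrix.single i j 1 * (K a)ᴴ)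
            from Finset.sum_congr rfl fun i _ => Finset.sum_comm]
          exact Finset.sum_comm
  refine ⟨K, hrepX, ?_, ?_⟩
  · -- trace preservation gives ∑ Kᴴ K = 1
    have key : ∀ p q : n, Matrix.trace (∑ a, K a * Matrix.single p q 1 * (K a)ᴴ)
        = (∑ a, (K a)ᴴ * K a) q p := by
      intro p q
      rw [Matrix.trace_sum, Matrix.sum_apply]
      refine Finset.sum_congr rfl fun a _ => ?_
      rw [Matrix.trace_mul_comm, ← mul_assoc, trace_mul_stdBasisMatrix]
    ext i j
    have h2 := h.2 (Matrix.single j i 1)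
    rw [hrep j i, key j i] at h2
    have h3 := trace_mul_stdBasisMatrix (1 : Matrix n n ℂ) j i
    rw [one_mul] at h3
    rw [h2, h3]
  · have h1 := hrepX 1
    rw [hu] at h1
    simpa [Matrix.mul_one] using h1.symm



variable {n m : Type*} [Fintype n] [Fintype m] [DecidableEq n]


lemma choi_apply' (Λ : Matrix n n ℂ →ₗ[ℂ] Matrix n n ℂ) (p q : n × n) :
    choi Λ p q =
      (Fintype.card n : ℂ)⁻¹ * Λ (Matrix.single p.1 q.1 1) p.2 q.2 := by
  obtain ⟨i, x⟩ := p; obtain ⟨j, y⟩ := q; exact choi_apply Λ i x j y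

lemma hsq_choi (Λ : Matrix n n ℂ →ₗ[ℂ] Matrix n n ℂ) :
    hsq (choi Λ) = Complex.normSq ((Fintype.card n : ℂ))⁻¹ *
      ∑ q : n × n, hsq (Λ (Matrix.single q.1 q.2 1)) := by
  unfold hsq
  simp only [choi_apply', Complex.normSq_mul]
  rw [← Finset.mul_sum]
  congr 1
  rw [show (∑ q : n × n, ∑ r : n × n,
        Complex.normSq (Λ (Matrix.single q.1 q.2 1) r.1 r.2))
      = ∑ z : (n × n) × (n × n),
        Complex.normSq (Λ (Matrix.single z.1.1 z.1.2 1) z.2.1 z.2.2)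
    from (Fintype.sum_prod_type (fun z : (n × n) × (n × n) =>
      Complex.normSq (Λ (Matrix.single z.1.1 z.1.2 1) z.2.1 z.2.2))).symm]
  refine Fintype.sum_equiv (Equiv.prodProdProdComm n n n n) _ _ ?_
  rintro ⟨⟨i, x⟩, ⟨j, y⟩⟩
  rfl

lemma choi_sub (Λ Γ : Matrix n n ℂ →ₗ[ℂ] Matrix n n ℂ) :
    choi Λ - choi Γ = choi (Λ - Γ) := by
  ext p q
  simp only [Matrix.sub_apply, choi_apply', LinearMap.sub_apply]
  ring

lemma kraus_apply_std (K : Matrix n n ℂ) (i j x y : n) :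
    ((K * Matrix.single i j 1 * Kᴴ : Matrix n n ℂ)) x y
      = K x i * star (K y j) := by
  simp [Matrix.mul_apply, Matrix.conjTranspose_apply, Matrix.single, ite_and,
    mul_ite, ite_mul, zero_mul, mul_zero, Finset.sum_ite_eq, Finset.sum_ite_eq',
    Finset.mul_sum, Finset.sum_mul]

lemma apply_entry (Δ : Matrix n n ℂ →ₗ[ℂ] Matrix n n ℂ) (X : Matrix n n ℂ) (x y : n) :
    Δ X x y = ∑ k, ∑ l, X k l * Δ (Matrix.single k l 1) x y := by
  have hX' : X = ∑ k, ∑ l, X k l • Matrix.single k l (1 : ℂ) := by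
    conv_lhs => rw [Matrix.matrix_eq_sum_single X]
    simp [Matrix.smul_single, smul_eq_mul]
  conv_lhs => rw [hX']
  rw [map_sum, Matrix.sum_apply]
  refine Finset.sum_congr rfl fun k _ => ?_
  rw [map_sum, Matrix.sum_apply]
  refine Finset.sum_congr rfl fun l _ => ?_
  rw [LinearMap.map_smul, Matrix.smul_apply, smul_eq_mul]

lemma mul_mul_conjT_apply (A Y : Matrix n n ℂ) (i j : n) :
    ((A * Y * Aᴴ : Matrix n n ℂ)) i j = ∑ k, ∑ l, A i k * Y k l * star (A j l) := by
  simp [Matrix.mul_apply, Matrix.conjTranspose_apply, Finset.sum_mul]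
  rw [Finset.sum_comm]

lemma transpose_kraus (K : m → Matrix n n ℂ)
    (h1 : ∑ a, (K a)ᴴ * K a = 1) (h2 : ∑ a, K a * (K a)ᴴ = 1) :
    (∑ a, ((K a)ᵀ)ᴴ * (K a)ᵀ = 1) ∧ (∑ a, (K a)ᵀ * ((K a)ᵀ)ᴴ = 1) := by
  constructor
  · have e : ∀ a, ((K a)ᵀ)ᴴ * (K a)ᵀ = (K a * (K a)ᴴ)ᵀ := by
      intro a; ext i j
      simp [Matrix.mul_apply, Matrix.conjTranspose_apply, Matrix.transpose_apply,
        mul_comm]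
    simp only [e]
    rw [← Matrix.transpose_sum, h2, Matrix.transpose_one]
  · have e : ∀ a, (K a)ᵀ * ((K a)ᵀ)ᴴ = ((K a)ᴴ * K a)ᵀ := by
      intro a; ext i j
      simp [Matrix.mul_apply, Matrix.conjTranspose_apply, Matrix.transpose_apply,
        mul_comm]
    simp only [e]
    rw [← Matrix.transpose_sum, h1, Matrix.transpose_one]




variable {n m : Type*} [Fintype n] [Fintype m] [DecidableEq n]


lemma hsq_le_hsq {n : Type*} [Fintype n] {A B : Matrix n n ℂ} (h : hsNorm A ≤ hsNorm B) :
    hsq A ≤ hsq B := by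
  rw [← sq_hsNorm, ← sq_hsNorm]
  exact pow_le_pow_left₀ (hsNorm_nonneg A) h 2

lemma sum_shuffle (F : n → n → ℂ) (G : m → n → ℂ) (H : m → n → ℂ) :
    ∑ k, ∑ l, (∑ a, G a k * H a l) * F k l = ∑ a, ∑ k, ∑ l, G a k * F k l * H a l := by
  simp only [Finset.sum_mul]
  calc ∑ k, ∑ l, ∑ a, G a k * H a l * F k l
      = ∑ k, ∑ a, ∑ l, G a k * H a l * F k l :=
        Finset.sum_congr rfl fun k _ => Finset.sum_comm
    _ = ∑ a, ∑ k, ∑ l, G a k * H a l * F k l := Finset.sum_comm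
    _ = ∑ a, ∑ k, ∑ l, G a k * F k l * H a l := by
        refine Finset.sum_congr rfl fun a _ => Finset.sum_congr rfl fun k _ =>
          Finset.sum_congr rfl fun l _ => by ring

lemma hsq_choi_comp_right (Δ Γ : Matrix n n ℂ →ₗ[ℂ] Matrix n n ℂ)
    (K : (n × n) → Matrix n n ℂ)
    (hKrep : ∀ X, Γ X = ∑ a, K a * X * (K a)ᴴ)
    (h1 : ∑ a, (K a)ᴴ * K a = 1) (h2 : ∑ a, K a * (K a)ᴴ = 1) :
    hsq (choi (Δ ∘ₗ Γ)) ≤ hsq (choi Δ) := by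
  rw [hsq_choi, hsq_choi]
  refine mul_le_mul_of_nonneg_left ?_ (Complex.normSq_nonneg _)
  have swap : ∀ (f : (n × n) → Matrix n n ℂ),
      ∑ q : n × n, hsq (f q) = ∑ r : n × n, ∑ q : n × n, Complex.normSq (f q r.1 r.2) := by
    intro f; unfold hsq; exact Finset.sum_comm
  rw [swap (fun q => (Δ ∘ₗ Γ) (Matrix.single q.1 q.2 1)),
    swap (fun q => Δ (Matrix.single q.1 q.2 1))]
  refine Finset.sum_le_sum fun r _ => ?_
  set Y : Matrix n n ℂ :=
    Matrix.of (fun k l => Δ (Matrix.single k l 1) r.1 r.2) with hY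
  obtain ⟨hL1, hL2⟩ := transpose_kraus K h1 h2
  have key : ∀ q : n × n, (Δ ∘ₗ Γ) (Matrix.single q.1 q.2 1) r.1 r.2
      = (∑ a, (K a)ᵀ * Y * ((K a)ᵀ)ᴴ) q.1 q.2 := by
    intro q
    rw [LinearMap.comp_apply, apply_entry Δ (Γ (Matrix.single q.1 q.2 1)) r.1 r.2,
      Matrix.sum_apply]
    have hG : ∀ k l, Γ (Matrix.single q.1 q.2 1) k l
        = ∑ a, K a k q.1 * star (K a l q.2) := by
      intro k l
      rw [hKrep, Matrix.sum_apply]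
      exact Finset.sum_congr rfl fun a _ => kraus_apply_std (K a) q.1 q.2 k l
    simp only [hG, mul_mul_conjT_apply, Matrix.transpose_apply]
    exact sum_shuffle (fun k l => Y k l) (fun a k => K a k q.1) (fun a l => star (K a l q.2))
  calc ∑ q : n × n, Complex.normSq ((Δ ∘ₗ Γ) (Matrix.single q.1 q.2 1) r.1 r.2)
      = hsq (∑ a, (K a)ᵀ * Y * ((K a)ᵀ)ᴴ) := by
        unfold hsq
        exact Finset.sum_congr rfl fun q _ => by rw [key q]
    _ ≤ hsq Y := hsq_le_hsq (kraus_contraction _ hL1 hL2 Y)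
    _ = ∑ q : n × n, Complex.normSq (Δ (Matrix.single q.1 q.2 1) r.1 r.2) := rfl

lemma hsq_choi_comp_left (Λ Δ : Matrix n n ℂ →ₗ[ℂ] Matrix n n ℂ)
    (hcontr : ∀ M, hsNorm (Λ M) ≤ hsNorm M) :
    hsq (choi (Λ ∘ₗ Δ)) ≤ hsq (choi Δ) := by
  rw [hsq_choi, hsq_choi]
  refine mul_le_mul_of_nonneg_left ?_ (Complex.normSq_nonneg _)
  exact Finset.sum_le_sum fun q _ => hsq_le_hsq (hcontr _)

lemma sqrt_two_triangle (a b c d : ℝ) :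
    Real.sqrt ((a + c) ^ 2 + (b + d) ^ 2) ≤
      Real.sqrt (a ^ 2 + b ^ 2) + Real.sqrt (c ^ 2 + d ^ 2) := by
  have h := norm_add_le (E := EuclideanSpace ℝ (Fin 2)) !₂[a, b] !₂[c, d]
  simpa [EuclideanSpace.norm_eq, Fin.sum_univ_two, Real.norm_eq_abs, sq_abs] using h

lemma choi_add (Λ Γ : Matrix n n ℂ →ₗ[ℂ] Matrix n n ℂ) :
    choi (Λ + Γ) = choi Λ + choi Γ := by
  ext p q
  simp only [Matrix.add_apply, choi_apply', LinearMap.add_apply]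
  ring


end S15

open S15 in
theorem statement15 (d : ℕ)
    (Λ₁ Λ₂ Γ₁ Γ₂ : Matrix (Fin d) (Fin d) ℂ →ₗ[ℂ] Matrix (Fin d) (Fin d) ℂ)
    (hΛ₁ : IsChannel Λ₁) (hΛ₁u : Λ₁ 1 = 1) (hΛ₂ : IsChannel Λ₂) (hΛ₂u : Λ₂ 1 = 1)
    (hΓ₁ : IsChannel Γ₁) (hΓ₁u : Γ₁ 1 = 1) (hΓ₂ : IsChannel Γ₂) (hΓ₂u : Γ₂ 1 = 1) :
    davCh (Λ₁ ∘ₗ Λ₂) (Γ₁ ∘ₗ Γ₂) ≤ davCh Λ₁ Γ₁ + davCh Λ₂ Γ₂ := by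
  classical
  set u : Matrix (Fin d) (Fin d) ℂ := ((Fintype.card (Fin d) : ℂ))⁻¹ • 1 with hu
  obtain ⟨K₁, hK₁rep, hK₁1, hK₁2⟩ := exists_kraus Λ₁ hΛ₁ hΛ₁u
  obtain ⟨K₂, hK₂rep, hK₂1, hK₂2⟩ := exists_kraus Γ₂ hΓ₂ hΓ₂u
  have hΛ₁contr : ∀ M, hsNorm (Λ₁ M) ≤ hsNorm M := by
    intro M; rw [hK₁rep]; exact kraus_contraction K₁ hK₁1 hK₁2 M
  set Δ₁ := Λ₁ - Γ₁ with hΔ₁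
  set Δ₂ := Λ₂ - Γ₂ with hΔ₂
  have hDec : Λ₁ ∘ₗ Λ₂ - Γ₁ ∘ₗ Γ₂ = Λ₁ ∘ₗ Δ₂ + Δ₁ ∘ₗ Γ₂ := by
    ext X
    simp only [LinearMap.sub_apply, LinearMap.add_apply, LinearMap.comp_apply,
      hΔ₁, hΔ₂, map_sub, Matrix.sub_apply, Matrix.add_apply]
    ring
  -- abbreviations
  set A₁ : ℝ := hsNorm (choi Δ₁) with hA₁
  set A₂ : ℝ := hsNorm (choi Δ₂) with hA₂
  set B₁ : ℝ := hsNorm (Δ₁ u) with hB₁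
  set B₂ : ℝ := hsNorm (Δ₂ u) with hB₂
  -- bound the Choi part
  have ha : hsNorm (choi (Λ₁ ∘ₗ Λ₂) - choi (Γ₁ ∘ₗ Γ₂)) ≤ A₂ + A₁ := by
    rw [choi_sub, hDec, choi_add]
    refine (hsNorm_add_le _ _).trans (add_le_add ?_ ?_)
    · exact hsNorm_le_hsNorm (hsq_choi_comp_left Λ₁ Δ₂ hΛ₁contr)
    · exact hsNorm_le_hsNorm (hsq_choi_comp_right Δ₁ Γ₂ K₂ hK₂rep hK₂1 hK₂2)
  -- bound the unit part
  have hΓ₂u' : Γ₂ u = u := by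
    rw [hu, LinearMap.map_smul, hΓ₂u]
  have hb : hsNorm ((Λ₁ ∘ₗ Λ₂) u - (Γ₁ ∘ₗ Γ₂) u) ≤ B₂ + B₁ := by
    have hsplit : (Λ₁ ∘ₗ Λ₂) u - (Γ₁ ∘ₗ Γ₂) u = Λ₁ (Δ₂ u) + Δ₁ u := by
      simp only [LinearMap.comp_apply, hΔ₁, hΔ₂, LinearMap.sub_apply, map_sub]
      rw [hΓ₂u']
      abel
    rw [hsplit]
    refine (hsNorm_add_le _ _).trans (add_le_add ?_ ?_)
    · exact hΛ₁contr _
    · exact le_refl _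
  -- assemble
  unfold davCh
  rw [show hsNorm (choi Λ₁ - choi Γ₁) = A₁ from by rw [hA₁, choi_sub],
    show hsNorm (choi Λ₂ - choi Γ₂) = A₂ from by rw [hA₂, choi_sub]]
  rw [← hu]
  rw [show hsNorm (Λ₁ u - Γ₁ u) = B₁ from by rw [hB₁, hΔ₁, LinearMap.sub_apply],
    show hsNorm (Λ₂ u - Γ₂ u) = B₂ from by rw [hB₂, hΔ₂, LinearMap.sub_apply]]
  have h1 : Real.sqrt (hsNorm (choi (Λ₁ ∘ₗ Λ₂) - choi (Γ₁ ∘ₗ Γ₂)) ^ 2 +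
      hsNorm ((Λ₁ ∘ₗ Λ₂) u - (Γ₁ ∘ₗ Γ₂) u) ^ 2) ≤
      Real.sqrt (A₂ ^ 2 + B₂ ^ 2) + Real.sqrt (A₁ ^ 2 + B₁ ^ 2) := by
    refine (Real.sqrt_le_sqrt (add_le_add
      (pow_le_pow_left₀ (hsNorm_nonneg _) ha 2)
      (pow_le_pow_left₀ (hsNorm_nonneg _) hb 2))).trans ?_
    exact sqrt_two_triangle A₂ B₂ A₁ B₁
  linarith
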